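/- Let G be the complete k-uniform hypergraph on [n] with 1 ≤ k ≤ n, (R_e)_e mutually independent, R_i = (R_e : i ∈ e). Suppose M is generated from (R_1,...,R_n) by a blackboard protocol (at each round the writer is determined by the transcript so far, and writes a deterministic function of its local R_i and the transcript), and X is a discrete random variable that is a deterministic function of (R_i, M) for every i ∈ [n]. Then H(M) ≥ ((n-k)/(n-1)) · H(X). -/

import Mathlib

/-- Probability that the random variable `X` (on finite outcome space `Ω`
with probability mass function `p`) takes the value `a`. -/
noncomputable def pmass {Ω α : Type*} [Fintype Ω] [DecidableEq α]
    (p : Ω → ℝ) (X : Ω → α) (a : α) : ℝ :=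
  ∑ ω, if X ω = a then p ω else 0

/-- Shannon entropy (in bits) of a finitely valued random variable. -/
noncomputable def ent {Ω α : Type*} [Fintype Ω] [Fintype α] [DecidableEq α]
    (p : Ω → ℝ) (X : Ω → α) : ℝ :=
  ∑ a, -(pmass p X a * Real.logb 2 (pmass p X a))

/-- Conditional Shannon entropy `H(X | Y) = H(X, Y) - H(Y)`. -/
noncomputable def condEnt {Ω α β : Type*} [Fintype Ω] [Fintype α] [Fintype β]
    [DecidableEq α] [DecidableEq β] (p : Ω → ℝ) (X : Ω → α) (Y : Ω → β) : ℝ :=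
  ent p (fun ω => (X ω, Y ω)) - ent p Y

/-- `p` is a probability mass function on `Ω`. -/
def IsProb {Ω : Type*} [Fintype Ω] (p : Ω → ℝ) : Prop :=
  (∀ ω, 0 ≤ p ω) ∧ ∑ ω, p ω = 1

/-- Hyperedges of the complete `k`-uniform hypergraph on `Fin n`. -/
abbrev Edge (n k : ℕ) := {s : Finset (Fin n) // s.card = k}

set_option linter.unusedSectionVars false

section core
open Finset Real
variable {Ω α β γ : Type*} [Fintype Ω] [Fintype α] [Fintype β] [Fintype γ]
  [DecidableEq α] [DecidableEq β] [DecidableEq γ] {p : Ω → ℝ}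

lemma pmass_nonneg (h0 : ∀ ω, 0 ≤ p ω) (X : Ω → α) (a : α) : 0 ≤ pmass p X a :=
  Finset.sum_nonneg fun ω _ => by split <;> simp [h0 ω]

lemma le_pmass (h0 : ∀ ω, 0 ≤ p ω) (X : Ω → α) (ω : Ω) : p ω ≤ pmass p X (X ω) := by
  have := Finset.single_le_sum (f := fun ω' => if X ω' = X ω then p ω' else 0)
    (fun ω' _ => by split <;> simp [h0 ω']) (Finset.mem_univ ω)
  simpa [pmass] using this

lemma pmass_pos (h0 : ∀ ω, 0 ≤ p ω) (X : Ω → α) {ω : Ω} (hω : p ω ≠ 0) :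
    0 < pmass p X (X ω) :=
  lt_of_lt_of_le (lt_of_le_of_ne (h0 ω) (Ne.symm hω)) (le_pmass h0 X ω)

lemma pmass_mono (h0 : ∀ ω, 0 ≤ p ω) {X : Ω → α} {Y : Ω → β} {a : α} {b : β}
    (h : ∀ ω, p ω ≠ 0 → X ω = a → Y ω = b) : pmass p X a ≤ pmass p Y b := by
  refine Finset.sum_le_sum fun ω _ => ?_
  by_cases hω : p ω = 0
  · simp [hω]
  · by_cases hx : X ω = a
    · simp [hx, h ω hω hx]
    · simp only [hx, if_false]
      split <;> simp [h0 ω]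

lemma sum_pmass_mul (X : Ω → α) (φ : α → ℝ) :
    ∑ a, pmass p X a * φ a = ∑ ω, p ω * φ (X ω) := by
  unfold pmass
  simp_rw [Finset.sum_mul]
  rw [Finset.sum_comm]
  refine Finset.sum_congr rfl fun ω _ => ?_
  simp only [ite_mul, zero_mul]
  rw [Finset.sum_ite_eq Finset.univ (X ω) (fun a => p ω * φ a)]
  simp

lemma ent_eq (X : Ω → α) : ent p X = -∑ ω, p ω * Real.logb 2 (pmass p X (X ω)) := by
  unfold ent
  rw [← sum_pmass_mul X (fun a => Real.logb 2 (pmass p X a))]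
  simp

lemma pmass_eq_of_iff {X : Ω → α} {Y : Ω → β} {a : α} {b : β}
    (h : ∀ ω, p ω ≠ 0 → (X ω = a ↔ Y ω = b)) : pmass p X a = pmass p Y b := by
  refine Finset.sum_congr rfl fun ω _ => ?_
  by_cases hω : p ω = 0
  · simp [hω]
  · simp only [h ω hω]

lemma ent_congr {X : Ω → α} {Y : Ω → β}
    (h : ∀ ω, p ω ≠ 0 → pmass p X (X ω) = pmass p Y (Y ω)) : ent p X = ent p Y := by
  rw [ent_eq, ent_eq]
  congr 1
  refine Finset.sum_congr rfl fun ω _ => ?_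
  by_cases hω : p ω = 0
  · simp [hω]
  · rw [h ω hω]

lemma ent_eq_of_inv {X : Ω → α} {Y : Ω → β} (f : α → β) (g : β → α)
    (hf : ∀ ω, p ω ≠ 0 → Y ω = f (X ω)) (hg : ∀ ω, p ω ≠ 0 → X ω = g (Y ω)) :
    ent p X = ent p Y := by
  refine ent_congr fun ω hω => ?_
  refine pmass_eq_of_iff fun ω' hω' => ⟨fun h => ?_, fun h => ?_⟩
  · rw [hf ω' hω', h, ← hf ω hω]
  · rw [hg ω' hω', h, ← hg ω hω]

lemma ent_pair_of_det {X : Ω → α} {Y : Ω → β} (f : α → β)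
    (h : ∀ ω, p ω ≠ 0 → Y ω = f (X ω)) :
    ent p (fun ω => (X ω, Y ω)) = ent p X :=
  (ent_eq_of_inv (fun a => (a, f a)) Prod.fst
    (fun ω hω => by rw [Prod.mk.injEq]; exact ⟨rfl, h ω hω⟩) (fun _ _ => rfl)).symm

lemma ent_comm (X : Ω → α) (Y : Ω → β) :
    ent p (fun ω => (X ω, Y ω)) = ent p (fun ω => (Y ω, X ω)) :=
  ent_eq_of_inv Prod.swap Prod.swap (fun _ _ => rfl) (fun _ _ => rfl)

lemma ent_subsingleton [Subsingleton α] (h1 : ∑ ω, p ω = 1) (X : Ω → α) :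
    ent p X = 0 := by
  rw [ent_eq]
  have : ∀ ω : Ω, pmass p X (X ω) = 1 := by
    intro ω
    unfold pmass
    rw [← h1]
    exact Finset.sum_congr rfl fun ω' _ => by simp [Subsingleton.elim (X ω') (X ω)]
  simp [this]

lemma pmass_pair_le_right (h0 : ∀ ω, 0 ≤ p ω) (X : Ω → α) (Y : Ω → β) (a : α) (b : β) :
    pmass p (fun ω => (X ω, Y ω)) (a, b) ≤ pmass p Y b :=
  pmass_mono h0 fun ω _ h => by
    simpa using congrArg Prod.snd h

lemma ent_le_ent_pair (h0 : ∀ ω, 0 ≤ p ω) (X : Ω → α) (Y : Ω → β) :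
    ent p Y ≤ ent p (fun ω => (X ω, Y ω)) := by
  rw [ent_eq, ent_eq]
  rw [neg_le_neg_iff]
  refine Finset.sum_le_sum fun ω _ => ?_
  by_cases hω : p ω = 0
  · simp [hω]
  · have h1 : 0 < pmass p (fun ω => (X ω, Y ω)) ((fun ω => (X ω, Y ω)) ω) :=
      pmass_pos h0 _ hω
    refine mul_le_mul_of_nonneg_left ?_ (h0 ω)
    have hle := pmass_pair_le_right h0 X Y (X ω) (Y ω)
    exact (Real.logb_le_logb one_lt_two h1 (h1.trans_le hle)).mpr hle

lemma sum_pmass (X : Ω → α) : ∑ a, pmass p X a = ∑ ω, p ω := by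
  simpa using sum_pmass_mul X (fun _ => (1 : ℝ))

lemma pmass_marg_left (X : Ω → α) (Y : Ω → β) (a : α) :
    ∑ b, pmass p (fun ω => (X ω, Y ω)) (a, b) = pmass p X a := by
  unfold pmass
  rw [Finset.sum_comm]
  refine Finset.sum_congr rfl fun ω _ => ?_
  simp only [Prod.mk.injEq]
  by_cases ha : X ω = a
  · simp only [ha, true_and]
    rw [Finset.sum_ite_eq Finset.univ (Y ω) (fun _ => p ω)]
    simp
  · simp [ha]

lemma pmass_marg_right (X : Ω → α) (Y : Ω → β) (b : β) :
    ∑ a, pmass p (fun ω => (X ω, Y ω)) (a, b) = pmass p Y b := by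
  unfold pmass
  rw [Finset.sum_comm]
  refine Finset.sum_congr rfl fun ω _ => ?_
  simp only [Prod.mk.injEq]
  by_cases hb : Y ω = b
  · simp only [hb, and_true]
    rw [Finset.sum_ite_eq Finset.univ (X ω) (fun _ => p ω)]
    simp
  · simp [hb]

/-- Submodularity: `H(X,Y,Z) + H(Y) ≤ H(X,Y) + H(Y,Z)`. -/
lemma ent_submod (h0 : ∀ ω, 0 ≤ p ω) (X : Ω → α) (Y : Ω → β) (Z : Ω → γ) :
    ent p (fun ω => (X ω, Y ω, Z ω)) + ent p Y ≤
      ent p (fun ω => (X ω, Y ω)) + ent p (fun ω => (Y ω, Z ω)) := by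
  classical
  set W : Ω → α × β × γ := fun ω => (X ω, Y ω, Z ω) with hW
  set qXY : α × β → ℝ := pmass p (fun ω => (X ω, Y ω))
  set qYZ : β × γ → ℝ := pmass p (fun ω => (Y ω, Z ω))
  set qY : β → ℝ := pmass p Y
  set q3 : α × β × γ → ℝ := pmass p W
  -- reduce to a sum inequality
  rw [ent_eq, ent_eq, ent_eq, ent_eq]
  rw [← sub_nonneg]
  have key : ∀ ω, p ω ≠ 0 →
      p ω * Real.logb 2 (qXY (X ω, Y ω)) + p ω * Real.logb 2 (qYZ (Y ω, Z ω))
        - p ω * Real.logb 2 (q3 (W ω)) - p ω * Real.logb 2 (qY (Y ω))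
      ≤ p ω * ((qXY (X ω, Y ω) * qYZ (Y ω, Z ω) / (q3 (W ω) * qY (Y ω)) - 1) / Real.log 2) := by
    intro ω hω
    have hpω : 0 < p ω := lt_of_le_of_ne (h0 ω) (Ne.symm hω)
    have h3 : 0 < q3 (W ω) := pmass_pos h0 W hω
    have hY : 0 < qY (Y ω) := pmass_pos h0 Y hω
    have hXY : 0 < qXY (X ω, Y ω) := pmass_pos h0 _ hω
    have hYZ : 0 < qYZ (Y ω, Z ω) := pmass_pos h0 _ hω
    have hq : 0 < qXY (X ω, Y ω) * qYZ (Y ω, Z ω) / (q3 (W ω) * qY (Y ω)) := by positivity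
    have hlog : Real.log (qXY (X ω, Y ω) * qYZ (Y ω, Z ω) / (q3 (W ω) * qY (Y ω)))
        ≤ qXY (X ω, Y ω) * qYZ (Y ω, Z ω) / (q3 (W ω) * qY (Y ω)) - 1 :=
      Real.log_le_sub_one_of_pos hq
    have expand : Real.logb 2 (qXY (X ω, Y ω)) + Real.logb 2 (qYZ (Y ω, Z ω))
        - Real.logb 2 (q3 (W ω)) - Real.logb 2 (qY (Y ω))
        = Real.log (qXY (X ω, Y ω) * qYZ (Y ω, Z ω) / (q3 (W ω) * qY (Y ω))) / Real.log 2 := by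
      rw [Real.log_div (by positivity) (by positivity), Real.log_mul hXY.ne' hYZ.ne',
        Real.log_mul h3.ne' hY.ne']
      unfold Real.logb
      ring
    calc p ω * Real.logb 2 (qXY (X ω, Y ω)) + p ω * Real.logb 2 (qYZ (Y ω, Z ω))
        - p ω * Real.logb 2 (q3 (W ω)) - p ω * Real.logb 2 (qY (Y ω))
        = p ω * (Real.log (qXY (X ω, Y ω) * qYZ (Y ω, Z ω) / (q3 (W ω) * qY (Y ω))) / Real.log 2) := by
          rw [← expand]; ring
      _ ≤ _ := by
          refine mul_le_mul_of_nonneg_left ?_ (h0 ω)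
          exact (div_le_div_iff_of_pos_right (Real.log_pos one_lt_two)).mpr hlog
  have hmargYZ : ∀ b, ∑ c, qYZ (b, c) = qY b := fun b => pmass_marg_left Y Z b
  have hmargXY : ∀ b, ∑ a, qXY (a, b) = qY b := fun b => pmass_marg_right X Y b
  have step1 : ∑ ω, (p ω * Real.logb 2 (qXY (X ω, Y ω)) + p ω * Real.logb 2 (qYZ (Y ω, Z ω))
      - p ω * Real.logb 2 (q3 (W ω)) - p ω * Real.logb 2 (qY (Y ω)))
      ≤ ∑ ω, p ω * ((qXY (X ω, Y ω) * qYZ (Y ω, Z ω) / (q3 (W ω) * qY (Y ω)) - 1) / Real.log 2) := by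
    refine Finset.sum_le_sum fun ω _ => ?_
    by_cases hω : p ω = 0
    · simp [hω]
    · exact key ω hω
  have step2 : ∑ ω, p ω * ((qXY (X ω, Y ω) * qYZ (Y ω, Z ω) / (q3 (W ω) * qY (Y ω)) - 1) / Real.log 2) ≤ 0 := by
    have hrw : ∑ ω, p ω * ((qXY (X ω, Y ω) * qYZ (Y ω, Z ω) / (q3 (W ω) * qY (Y ω)) - 1) / Real.log 2)
        = ∑ t, q3 t * ((qXY (t.1, t.2.1) * qYZ (t.2.1, t.2.2) / (q3 t * qY t.2.1) - 1) / Real.log 2) := by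
      rw [sum_pmass_mul W
        (fun t => (qXY (t.1, t.2.1) * qYZ (t.2.1, t.2.2) / (q3 t * qY t.2.1) - 1) / Real.log 2)]
    rw [hrw]
    have hL : (0 : ℝ) < Real.log 2 := Real.log_pos one_lt_two
    have expand : ∀ t : α × β × γ,
        q3 t * ((qXY (t.1, t.2.1) * qYZ (t.2.1, t.2.2) / (q3 t * qY t.2.1) - 1) / Real.log 2)
        = (q3 t * (qXY (t.1, t.2.1) * qYZ (t.2.1, t.2.2) / (q3 t * qY t.2.1))) / Real.log 2
          - q3 t / Real.log 2 := by
      intro t; ring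
    rw [Finset.sum_congr rfl fun t _ => expand t, Finset.sum_sub_distrib,
      ← Finset.sum_div, ← Finset.sum_div, sub_nonpos]
    refine (div_le_div_iff_of_pos_right hL).mpr ?_
    have hh : ∀ t : α × β × γ, q3 t * (qXY (t.1, t.2.1) * qYZ (t.2.1, t.2.2) / (q3 t * qY t.2.1))
        ≤ if qY t.2.1 = 0 then 0 else qXY (t.1, t.2.1) * qYZ (t.2.1, t.2.2) / qY t.2.1 := by
      intro t
      by_cases h3 : q3 t = 0
      · rw [h3, zero_mul]
        split
        · exact le_refl 0
        · exact div_nonneg (mul_nonneg (pmass_nonneg h0 _ _) (pmass_nonneg h0 _ _))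
            (pmass_nonneg h0 _ _)
      · have h3' : 0 < q3 t := lt_of_le_of_ne (pmass_nonneg h0 W t) (Ne.symm h3)
        have hYt : q3 t ≤ qY t.2.1 := pmass_mono h0 (fun ω _ h => by rw [← h])
        have hb : qY t.2.1 ≠ 0 := (lt_of_lt_of_le h3' hYt).ne'
        rw [if_neg hb]
        refine le_of_eq ?_
        field_simp
    have hsum2 : ∑ t : α × β × γ,
        (if qY t.2.1 = 0 then 0 else qXY (t.1, t.2.1) * qYZ (t.2.1, t.2.2) / qY t.2.1)
        ≤ ∑ b, qY b := by
      rw [Fintype.sum_prod_type]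
      simp_rw [Fintype.sum_prod_type]
      rw [Finset.sum_comm]
      refine Finset.sum_le_sum fun b _ => ?_
      by_cases hb : qY b = 0
      · simp [hb]
      · simp only [hb, if_false]
        have e1 : ∀ a, (∑ c, qXY (a, b) * qYZ (b, c) / qY b) = qXY (a, b) := by
          intro a
          rw [← Finset.sum_div, ← Finset.mul_sum, hmargYZ b, mul_div_assoc, div_self hb, mul_one]
        rw [Finset.sum_congr rfl fun a _ => e1 a, hmargXY b]
    calc ∑ t, q3 t * (qXY (t.1, t.2.1) * qYZ (t.2.1, t.2.2) / (q3 t * qY t.2.1))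
        ≤ ∑ t : α × β × γ,
          (if qY t.2.1 = 0 then 0 else qXY (t.1, t.2.1) * qYZ (t.2.1, t.2.2) / qY t.2.1) :=
          Finset.sum_le_sum fun t _ => hh t
      _ ≤ ∑ b, qY b := hsum2
      _ = ∑ ω, p ω := sum_pmass Y
      _ = ∑ t, q3 t := (sum_pmass W).symm
  have esum : ∑ ω, (p ω * Real.logb 2 (qXY (X ω, Y ω)) + p ω * Real.logb 2 (qYZ (Y ω, Z ω))
      - p ω * Real.logb 2 (q3 (W ω)) - p ω * Real.logb 2 (qY (Y ω)))
      = (∑ ω, p ω * Real.logb 2 (qXY (X ω, Y ω))) + (∑ ω, p ω * Real.logb 2 (qYZ (Y ω, Z ω)))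
        - (∑ ω, p ω * Real.logb 2 (q3 (W ω))) - (∑ ω, p ω * Real.logb 2 (qY (Y ω))) := by
    rw [Finset.sum_sub_distrib, Finset.sum_sub_distrib, Finset.sum_add_distrib]
  linarith [step1.trans step2]

lemma pmass_le_one (h0 : ∀ ω, 0 ≤ p ω) (h1 : ∑ ω, p ω = 1) (X : Ω → α) (a : α) :
    pmass p X a ≤ 1 := by
  rw [← h1]
  exact Finset.sum_le_sum fun ω _ => by split <;> simp [h0 ω]

lemma ent_nonneg (h0 : ∀ ω, 0 ≤ p ω) (h1 : ∑ ω, p ω = 1) (X : Ω → α) : 0 ≤ ent p X := by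
  refine Finset.sum_nonneg fun a _ => ?_
  rw [neg_nonneg]
  refine mul_nonpos_of_nonneg_of_nonpos (pmass_nonneg h0 X a) ?_
  exact Real.logb_nonpos one_lt_two (pmass_nonneg h0 X a) (pmass_le_one h0 h1 X a)

lemma ent_pair_le (h0 : ∀ ω, 0 ≤ p ω) (h1 : ∑ ω, p ω = 1) (X : Ω → α) (Z : Ω → γ) :
    ent p (fun ω => (X ω, Z ω)) ≤ ent p X + ent p Z := by
  have u : Ω → Unit := fun _ => ()
  have hsub := ent_submod h0 X (fun _ => ()) Z
  have e0 : ent p (fun _ : Ω => ()) = 0 := ent_subsingleton h1 _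
  have e1 : ent p (fun ω => (X ω, (), Z ω)) = ent p (fun ω => (X ω, Z ω)) :=
    ent_eq_of_inv (fun t => (t.1, t.2.2)) (fun t => (t.1, (), t.2))
      (fun _ _ => rfl) (fun _ _ => rfl)
  have e2 : ent p (fun ω => (X ω, ())) = ent p X :=
    ent_eq_of_inv Prod.fst (fun a => (a, ())) (fun _ _ => rfl) (fun _ _ => rfl)
  have e3 : ent p (fun ω => ((), Z ω)) = ent p Z :=
    ent_eq_of_inv Prod.snd (fun c => ((), c)) (fun _ _ => rfl) (fun _ _ => rfl)
  rw [e0, e1, e2, e3] at hsub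
  linarith

lemma condEnt_le_ent (h0 : ∀ ω, 0 ≤ p ω) (h1 : ∑ ω, p ω = 1) (X : Ω → α) (Y : Ω → β) :
    condEnt p X Y ≤ ent p X := by
  have := ent_pair_le h0 h1 X Y
  unfold condEnt
  linarith

lemma condEnt_eq_zero {X : Ω → α} {Y : Ω → β} (f : β → α)
    (h : ∀ ω, p ω ≠ 0 → X ω = f (Y ω)) : condEnt p X Y = 0 := by
  unfold condEnt
  rw [ent_comm, ent_pair_of_det f h, sub_self]

lemma condEnt_nonneg (h0 : ∀ ω, 0 ≤ p ω) (X : Ω → α) (Y : Ω → β) :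
    0 ≤ condEnt p X Y := by
  have := ent_le_ent_pair h0 X Y
  unfold condEnt
  linarith

/-- Conditional distribution given `Y = b`. -/
noncomputable def condp (p : Ω → ℝ) (Y : Ω → β) (b : β) : Ω → ℝ :=
  fun ω => if Y ω = b then p ω / pmass p Y b else 0

lemma pmass_condp (Y : Ω → β) (b : β) (X : Ω → α) (a : α) :
    pmass (condp p Y b) X a = pmass p (fun ω => (X ω, Y ω)) (a, b) / pmass p Y b := by
  unfold pmass condp
  rw [Finset.sum_div]
  refine Finset.sum_congr rfl fun ω _ => ?_
  by_cases hx : X ω = a <;> by_cases hy : Y ω = b <;>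
    simp [hx, hy, Prod.ext_iff, pmass]

lemma condp_isProb (h0 : ∀ ω, 0 ≤ p ω) {Y : Ω → β} {b : β} (hb : pmass p Y b ≠ 0) :
    IsProb (condp p Y b) := by
  constructor
  · intro ω
    unfold condp
    split
    · exact div_nonneg (h0 ω) (pmass_nonneg h0 Y b)
    · exact le_refl 0
  · unfold condp
    have e : ∀ ω, (if Y ω = b then p ω / pmass p Y b else 0)
        = (if Y ω = b then p ω else 0) / pmass p Y b := by
      intro ω; split <;> simp
    rw [Finset.sum_congr rfl fun ω _ => e ω, ← Finset.sum_div]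
    exact div_self hb

lemma condp_ne_zero {Y : Ω → β} {b : β} {ω : Ω} (h : condp p Y b ω ≠ 0) :
    Y ω = b ∧ p ω ≠ 0 := by
  unfold condp at h
  by_cases hy : Y ω = b
  · refine ⟨hy, fun h0 => h ?_⟩
    simp [hy, h0]
  · simp [hy] at h

/-- Decomposition of joint entropy via conditional distributions. -/
lemma ent_decomp (h0 : ∀ ω, 0 ≤ p ω) (X : Ω → α) (Y : Ω → β) :
    ent p (fun ω => (X ω, Y ω)) = ent p Y + ∑ b, pmass p Y b * ent (condp p Y b) X := by
  have perb : ∀ b, ∑ a, -(pmass p (fun ω => (X ω, Y ω)) (a, b) *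
      Real.logb 2 (pmass p (fun ω => (X ω, Y ω)) (a, b)))
      = -(pmass p Y b * Real.logb 2 (pmass p Y b)) + pmass p Y b * ent (condp p Y b) X := by
    intro b
    by_cases hb : pmass p Y b = 0
    · have hz : ∀ a, pmass p (fun ω => (X ω, Y ω)) (a, b) = 0 := by
        intro a
        refine le_antisymm ?_ (pmass_nonneg h0 _ _)
        rw [← hb]
        exact pmass_pair_le_right h0 X Y a b
      simp [hb, hz]
    · have hb' : 0 < pmass p Y b := lt_of_le_of_ne (pmass_nonneg h0 Y b) (Ne.symm hb)
      unfold ent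
      rw [Finset.mul_sum]
      have pera : ∀ a, pmass p Y b * -(pmass (condp p Y b) X a *
          Real.logb 2 (pmass (condp p Y b) X a))
          = -(pmass p (fun ω => (X ω, Y ω)) (a, b) *
              Real.logb 2 (pmass p (fun ω => (X ω, Y ω)) (a, b)))
            + pmass p (fun ω => (X ω, Y ω)) (a, b) * Real.logb 2 (pmass p Y b) := by
        intro a
        rw [pmass_condp]
        by_cases ha : pmass p (fun ω => (X ω, Y ω)) (a, b) = 0
        · simp [ha]
        · have ha' : 0 < pmass p (fun ω => (X ω, Y ω)) (a, b) :=
            lt_of_le_of_ne (pmass_nonneg h0 _ _) (Ne.symm ha)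
          rw [Real.logb_div ha hb]
          field_simp
          ring
      rw [Finset.sum_congr rfl fun a _ => pera a, Finset.sum_add_distrib, ← Finset.sum_mul,
        pmass_marg_right]
      ring
  have lhs : ent p (fun ω => (X ω, Y ω)) = ∑ b, ∑ a, -(pmass p (fun ω => (X ω, Y ω)) (a, b) *
      Real.logb 2 (pmass p (fun ω => (X ω, Y ω)) (a, b))) := by
    unfold ent
    rw [Fintype.sum_prod_type, Finset.sum_comm]
  rw [lhs, Finset.sum_congr rfl fun b _ => perb b, Finset.sum_add_distrib]
  rfl

lemma condEnt_decomp (h0 : ∀ ω, 0 ≤ p ω) (X : Ω → α) (Y : Ω → β) :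
    condEnt p X Y = ∑ b, pmass p Y b * ent (condp p Y b) X := by
  unfold condEnt
  rw [ent_decomp h0 X Y]
  ring

lemma condEnt_pair_decomp (h0 : ∀ ω, 0 ≤ p ω) (X : Ω → α) (Y : Ω → β) (Z : Ω → γ) :
    condEnt p X (fun ω => (Y ω, Z ω)) = ∑ b, pmass p Y b * condEnt (condp p Y b) X Z := by
  unfold condEnt
  have e1 : ent p (fun ω => (X ω, Y ω, Z ω)) = ent p (fun ω => ((X ω, Z ω), Y ω)) :=
    ent_eq_of_inv (fun t => ((t.1, t.2.2), t.2.1)) (fun t => (t.1.1, t.2, t.1.2))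
      (fun _ _ => rfl) (fun _ _ => rfl)
  have e2 : ent p (fun ω => (Y ω, Z ω)) = ent p (fun ω => (Z ω, Y ω)) := ent_comm Y Z
  rw [e1, e2, ent_decomp h0 (fun ω => (X ω, Z ω)) Y, ent_decomp h0 Z Y,
    add_sub_add_left_eq_sub, ← Finset.sum_sub_distrib]
  exact Finset.sum_congr rfl fun b _ => (mul_sub _ _ _).symm

/-- Entropy of an independent tuple is the sum of the entropies. -/
lemma ent_tuple_indep {ι ρ' : Type*} [Fintype ι] [DecidableEq ι] [Fintype ρ'] [DecidableEq ρ']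
    (h0 : ∀ ω, 0 ≤ p ω) (R : ι → Ω → ρ')
    (hind : ∀ x : ι → ρ', pmass p (fun ω => fun e => R e ω) x = ∏ e, pmass p (R e) (x e)) :
    ent p (fun ω => fun e => R e ω) = ∑ e, ent p (R e) := by
  have rhs : ∑ e : ι, ent p (R e) = -∑ ω, p ω * ∑ e, Real.logb 2 (pmass p (R e) (R e ω)) := by
    rw [Finset.sum_congr rfl fun e (_ : e ∈ Finset.univ) => ent_eq (R e),
      Finset.sum_neg_distrib, Finset.sum_comm]
    congr 1
    exact Finset.sum_congr rfl fun ω _ => (Finset.mul_sum _ _ _).symm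
  rw [ent_eq, rhs, neg_inj]
  refine Finset.sum_congr rfl fun ω _ => ?_
  by_cases hω : p ω = 0
  · simp [hω]
  · rw [hind]
    have hpos : ∀ e : ι, pmass p (R e) (R e ω) ≠ 0 :=
      fun e => (pmass_pos h0 (R e) hω).ne'
    congr 1
    unfold Real.logb
    rw [Real.log_prod fun e _ => hpos e, Finset.sum_div]

end core

section tuples
open Finset
variable {Ω ι ρ α : Type*} [Fintype Ω] [Fintype ι] [DecidableEq ι] [Fintype ρ] [DecidableEq ρ]
  [Fintype α] [DecidableEq α] {p : Ω → ℝ}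

/-- The tuple of the variables `R e` for `e ∈ S`. -/
def tup (R : ι → Ω → ρ) (S : Finset ι) : Ω → ({x // x ∈ S} → ρ) := fun ω e => R e.1 ω

/-- Joint entropy of `W` together with the tuple `(R e)_{e ∈ S}`. -/
noncomputable def AT (p : Ω → ℝ) (W : Ω → α) (R : ι → Ω → ρ) (S : Finset ι) : ℝ :=
  ent p (fun ω => (W ω, tup R S ω))

lemma ent_tup_le (h0 : ∀ ω, 0 ≤ p ω) (h1 : ∑ ω, p ω = 1) (R : ι → Ω → ρ) (S : Finset ι) :
    ent p (tup R S) ≤ ∑ e ∈ S, ent p (R e) := by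
  induction S using Finset.cons_induction with
  | empty =>
      haveI : IsEmpty {x // x ∈ (∅ : Finset ι)} := ⟨fun x => (Finset.notMem_empty x.1 x.2)⟩
      haveI : Unique ({x // x ∈ (∅ : Finset ι)} → ρ) := Pi.uniqueOfIsEmpty _
      rw [ent_subsingleton h1]
      simp
  | cons a S ha ih =>
      have e : ent p (tup R (Finset.cons a S ha)) = ent p (fun ω => (R a ω, tup R S ω)) :=
        ent_eq_of_inv
          (fun t => (t ⟨a, Finset.mem_cons_self a S⟩,
            fun e => t ⟨e.1, Finset.mem_cons_of_mem e.2⟩))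
          (fun u => fun e => if h : e.1 ∈ S then u.2 ⟨e.1, h⟩ else u.1)
          (fun ω _ => rfl)
          (fun ω _ => by
            funext e
            dsimp [tup]
            split
            · rfl
            · next h =>
                obtain h' | h' := Finset.mem_cons.mp e.2
                · rw [h']
                · exact absurd h' h)
      rw [e, Finset.sum_cons]
      have := ent_pair_le h0 h1 (R a) (tup R S)
      linarith

lemma AT_step (h0 : ∀ ω, 0 ≤ p ω) (W : Ω → α) (R : ι → Ω → ρ) {T' T : Finset ι} {a : ι}
    (hsub : T' ⊆ T) (ha : a ∉ T) :
    AT p W R (insert a T) + AT p W R T' ≤ AT p W R (insert a T') + AT p W R T := by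
  have hsm := ent_submod h0 (R a) (fun ω => (W ω, tup R T' ω)) (tup R (T \ T'))
  have E1 : ent p (fun ω => (R a ω, (W ω, tup R T' ω), tup R (T \ T') ω))
      = AT p W R (insert a T) := by
    refine ent_eq_of_inv
      (fun t => (t.2.1.1, fun e => if h : e.1 ∈ T' then t.2.1.2 ⟨e.1, h⟩
        else if h2 : e.1 ∈ T \ T' then t.2.2 ⟨e.1, h2⟩ else t.1))
      (fun u => (u.2 ⟨a, Finset.mem_insert_self a T⟩,
        (u.1, fun e => u.2 ⟨e.1, Finset.mem_insert_of_mem (hsub e.2)⟩),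
        fun e => u.2 ⟨e.1, Finset.mem_insert_of_mem (Finset.mem_sdiff.mp e.2).1⟩))
      (fun ω _ => ?_) (fun ω _ => rfl)
    refine Prod.ext rfl ?_
    funext e
    dsimp [tup]
    split
    · rfl
    · next h =>
        split
        · rfl
        · next h2 =>
            obtain h' | h' := Finset.mem_insert.mp e.2
            · rw [h']
            · exact absurd (Finset.mem_sdiff.mpr ⟨h', h⟩) h2
  have E3 : ent p (fun ω => (R a ω, (W ω, tup R T' ω)))
      = AT p W R (insert a T') := by
    refine ent_eq_of_inv
      (fun t => (t.2.1, fun e => if h : e.1 ∈ T' then t.2.2 ⟨e.1, h⟩ else t.1))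
      (fun u => (u.2 ⟨a, Finset.mem_insert_self a T'⟩,
        (u.1, fun e => u.2 ⟨e.1, Finset.mem_insert_of_mem e.2⟩)))
      (fun ω _ => ?_) (fun ω _ => rfl)
    refine Prod.ext rfl ?_
    funext e
    dsimp [tup]
    split
    · rfl
    · next h =>
        obtain h' | h' := Finset.mem_insert.mp e.2
        · rw [h']
        · exact absurd h' h
  have E4 : ent p (fun ω => ((W ω, tup R T' ω), tup R (T \ T') ω))
      = AT p W R T := by
    refine ent_eq_of_inv
      (fun t => (t.1.1, fun e => if h : e.1 ∈ T' then t.1.2 ⟨e.1, h⟩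
        else t.2 ⟨e.1, Finset.mem_sdiff.mpr ⟨e.2, h⟩⟩))
      (fun u => ((u.1, fun e => u.2 ⟨e.1, hsub e.2⟩),
        fun e => u.2 ⟨e.1, (Finset.mem_sdiff.mp e.2).1⟩))
      (fun ω _ => ?_) (fun ω _ => rfl)
    refine Prod.ext rfl ?_
    funext e
    dsimp [tup]
    split <;> rfl
  rw [E1, E3, E4] at hsm
  have hAT' : ent p (fun ω => (W ω, tup R T' ω)) = AT p W R T' := rfl
  rw [hAT'] at hsm
  linarith

lemma AT_telescope_le (h0 : ∀ ω, 0 ≤ p ω) (W : Ω → α) (R : ι → Ω → ρ)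
    (rk : ι → ℕ) (hrk : Function.Injective rk) (S : Finset ι) :
    ∑ e ∈ S, (AT p W R (insert e (univ.filter (fun e' => rk e' < rk e)))
      - AT p W R (univ.filter (fun e' => rk e' < rk e))) ≤ AT p W R S - AT p W R ∅ := by
  induction S using Finset.strongInduction with
  | _ S ih =>
    rcases S.eq_empty_or_nonempty with hS | hS
    · simp [hS]
    · obtain ⟨a, haS, hmax⟩ := Finset.exists_max_image S rk hS
      have hane : a ∉ S.erase a := Finset.notMem_erase a S
      have hsub : S.erase a ⊆ univ.filter (fun e' => rk e' < rk a) := by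
        intro b hb
        simp only [Finset.mem_filter, Finset.mem_univ, true_and]
        exact lt_of_le_of_ne (hmax b (Finset.mem_of_mem_erase hb))
          (fun h => (Finset.ne_of_mem_erase hb) (hrk h))
      have hnot : a ∉ univ.filter (fun e' => rk e' < rk a) := by simp
      have step := AT_step (p := p) h0 W R hsub hnot
      have ihe := ih (S.erase a) (Finset.erase_ssubset haS)
      have hS' : S = insert a (S.erase a) := (Finset.insert_erase haS).symm
      rw [hS', Finset.sum_insert hane]
      linarith

lemma AT_telescope_eq {m : ℕ} (W : Ω → α) (R : ι → Ω → ρ) (eqv : ι ≃ Fin m) :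
    ∑ e : ι, (AT p W R (insert e (univ.filter (fun e' => (eqv e' : ℕ) < (eqv e : ℕ))))
      - AT p W R (univ.filter (fun e' => (eqv e' : ℕ) < (eqv e : ℕ))))
      = AT p W R univ - AT p W R ∅ := by
  set B : ℕ → ℝ := fun t => AT p W R (univ.filter (fun e => (eqv e : ℕ) < t)) with hB
  have hins : ∀ e : ι, univ.filter (fun e' => (eqv e' : ℕ) < (eqv e : ℕ) + 1)
      = insert e (univ.filter (fun e' => (eqv e' : ℕ) < (eqv e : ℕ))) := by
    intro e
    ext e'
    simp only [Finset.mem_filter, Finset.mem_univ, true_and, Finset.mem_insert,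
      Nat.lt_succ_iff, le_iff_lt_or_eq]
    constructor
    · rintro (h | h)
      · exact Or.inr h
      · exact Or.inl (eqv.injective (Fin.val_injective h))
    · rintro (h | h)
      · exact Or.inr (by rw [h])
      · exact Or.inl h
  have step1 : ∑ e : ι, (AT p W R (insert e (univ.filter (fun e' => (eqv e' : ℕ) < (eqv e : ℕ))))
      - AT p W R (univ.filter (fun e' => (eqv e' : ℕ) < (eqv e : ℕ))))
      = ∑ e : ι, (B ((eqv e : ℕ) + 1) - B (eqv e : ℕ)) := by
    refine Finset.sum_congr rfl fun e _ => ?_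
    rw [hB]
    dsimp only
    rw [hins e]
  rw [step1]
  have step2 : ∑ e : ι, (B ((eqv e : ℕ) + 1) - B (eqv e : ℕ))
      = ∑ t : Fin m, (B ((t : ℕ) + 1) - B (t : ℕ)) :=
    Equiv.sum_comp eqv (fun t : Fin m => B ((t : ℕ) + 1) - B (t : ℕ))
  rw [step2, Fin.sum_univ_eq_sum_range (fun t => B (t + 1) - B t) m, Finset.sum_range_sub B m]
  have hBm : B m = AT p W R univ := by
    rw [hB]
    dsimp only
    rw [Finset.filter_true_of_mem fun e _ => (eqv e).isLt]
  have hB0 : B 0 = AT p W R ∅ := by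
    rw [hB]
    dsimp only
    rw [Finset.filter_false_of_mem fun e _ => Nat.not_lt_zero _]
  rw [hBm, hB0]

end tuples

open Finset in
theorem stmt_19 {Ω ρ μ χ : Type*} [Fintype Ω] [Fintype ρ] [Fintype μ] [Fintype χ]
    [DecidableEq ρ] [DecidableEq μ] [DecidableEq χ]
    (p : Ω → ℝ) (hp : IsProb p) (n k T : ℕ) (hk1 : 1 ≤ k) (hkn : k ≤ n)
    (R : Edge n k → Ω → ρ)
    (hindep : ∀ x : Edge n k → ρ,
      pmass p (fun ω => fun e => R e ω) x = ∏ e, pmass p (R e) (x e))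
    (M : Fin T → Ω → μ)
    -- blackboard protocol: at round `j` the writer `istar` is determined by the
    -- transcript so far, and the written symbol depends only on the transcript
    -- and the writer's local randomness `(R e)_{istar ∈ e}`
    (hproto : ∀ j : Fin T, ∃ (istar : (Fin j.val → μ) → Fin n)
        (f : (Fin j.val → μ) → (Edge n k → ρ) → μ),
      (∀ pre r r', (∀ e : Edge n k, istar pre ∈ e.1 → r e = r' e) → f pre r = f pre r') ∧
      (∀ ω, p ω ≠ 0 →
        M j ω = f (fun l => M ⟨l.val, l.isLt.trans j.isLt⟩ ω) (fun e => R e ω)))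
    (X : Ω → χ)
    (hX : ∀ i : Fin n, ∃ g : ({e : Edge n k // i ∈ e.1} → ρ) → (Fin T → μ) → χ,
      ∀ ω, p ω ≠ 0 → X ω = g (fun e => R e.1 ω) (fun j => M j ω)) :
    ((n : ℝ) - (k : ℝ)) / ((n : ℝ) - 1) * ent p X ≤
      ent p (fun ω => fun j => M j ω) := by
  classical
  obtain ⟨h0, h1⟩ := hp
  set Mfull : Ω → (Fin T → μ) := fun ω => fun j => M j ω with hMfull
  -- degenerate case k = n
  by_cases hkeq : k = n
  · rw [hkeq, sub_self, zero_div, zero_mul]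
    exact ent_nonneg h0 h1 Mfull
  have hklt : k < n := lt_of_le_of_ne hkn hkeq
  have hn2 : 2 ≤ n := lt_of_le_of_lt hk1 hklt
  have hn1 : (0 : ℝ) < (n : ℝ) - 1 := by
    have : (2 : ℝ) ≤ (n : ℝ) := by exact_mod_cast hn2
    linarith
  -- basic nonemptiness
  have hΩ : Nonempty Ω := by
    by_contra h
    haveI := not_nonempty_iff.mp h
    rw [Finset.univ_eq_empty, Finset.sum_empty] at h1
    exact one_ne_zero h1.symm
  obtain ⟨s₀, _, hs₀⟩ := Finset.exists_subset_card_eq (s := (Finset.univ : Finset (Fin n)))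
    (by simpa using hkn)
  have dρ : ρ := R ⟨s₀, hs₀⟩ (Classical.arbitrary Ω)
  -- the local views
  let Ri : (i : Fin n) → Ω → ({e : Edge n k // i ∈ e.1} → ρ) := fun i ω e => R e.1 ω
  -- ranks on edges
  let eqv := Fintype.equivFin (Edge n k)
  let rk : Edge n k → ℕ := fun e => (eqv e : ℕ)
  have hrk : Function.Injective rk := fun a b h =>
    eqv.injective (Fin.val_injective h)
  let P : Edge n k → Finset (Edge n k) := fun e => univ.filter (fun e' => rk e' < rk e)
  let J : Edge n k → ℝ := fun e =>
    ent p (R e) + AT p X R (P e) - AT p X R (insert e (P e))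
  let Si : Fin n → Finset (Edge n k) := fun i => univ.filter (fun e => i ∈ e.1)
  -- AT at ∅ is ent of X
  have hAT0 : AT p X R ∅ = ent p X := by
    refine ent_eq_of_inv (Y := X) Prod.fst
      (fun x => (x, fun e => absurd e.2 (Finset.notMem_empty e.1)))
      (fun ω _ => rfl) (fun ω _ => ?_)
    refine Prod.ext rfl ?_
    funext e
    exact absurd e.2 (Finset.notMem_empty e.1)
  -- AT at univ dominates the full-tuple entropy
  have htupU : ent p (tup R Finset.univ) = ent p (fun ω => fun e => R e ω) :=
    ent_eq_of_inv (fun t => fun e => t ⟨e, Finset.mem_univ e⟩) (fun u => fun e => u e.1)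
      (fun ω _ => rfl) (fun ω _ => rfl)
  have hATU : ∑ e : Edge n k, ent p (R e) ≤ AT p X R Finset.univ := by
    rw [← ent_tuple_indep h0 R hindep, ← htupU]
    exact ent_le_ent_pair h0 X (tup R Finset.univ)
  -- sum of the J's is at most ent X
  have hsumJ : ∑ e : Edge n k, J e ≤ ent p X := by
    have htel := AT_telescope_eq (p := p) X R eqv
    have expand : ∑ e : Edge n k, J e = (∑ e : Edge n k, ent p (R e))
        - ∑ e : Edge n k, (AT p X R (insert e (P e)) - AT p X R (P e)) := by
      rw [← Finset.sum_sub_distrib]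
      exact Finset.sum_congr rfl fun e _ => by ring
    rw [expand, htel, hAT0]
    linarith
  -- Part 1 : per-agent bound
  have part1 : ∀ i : Fin n, ent p X - ∑ e ∈ Si i, J e ≤ condEnt p X (Ri i) := by
    intro i
    have hpair : ent p (fun ω => (X ω, Ri i ω)) = AT p X R (Si i) :=
      ent_eq_of_inv
        (fun t => (t.1, fun e => t.2 ⟨e.1, (Finset.mem_filter.mp e.2).2⟩))
        (fun u => (u.1, fun e => u.2 ⟨e.1, Finset.mem_filter.mpr ⟨Finset.mem_univ _, e.2⟩⟩))
        (fun ω _ => rfl) (fun ω _ => rfl)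
    have hRile : ent p (Ri i) ≤ ∑ e ∈ Si i, ent p (R e) := by
      have : ent p (Ri i) = ent p (tup R (Si i)) :=
        ent_eq_of_inv
          (fun t => fun e => t ⟨e.1, (Finset.mem_filter.mp e.2).2⟩)
          (fun u => fun e => u ⟨e.1, Finset.mem_filter.mpr ⟨Finset.mem_univ _, e.2⟩⟩)
          (fun ω _ => rfl) (fun ω _ => rfl)
      rw [this]
      exact ent_tup_le h0 h1 R (Si i)
    have htele := AT_telescope_le (p := p) h0 X R rk hrk (Si i)
    have hJsum : ∑ e ∈ Si i, J e = ∑ e ∈ Si i, ent p (R e)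
        - ∑ e ∈ Si i, (AT p X R (insert e (P e)) - AT p X R (P e)) := by
      rw [← Finset.sum_sub_distrib]
      exact Finset.sum_congr rfl fun e _ => by ring
    unfold condEnt
    rw [hpair]
    rw [hJsum]
    rw [hAT0] at htele
    linarith
  -- double counting
  have hdouble : ∑ i : Fin n, ∑ e ∈ Si i, J e = (k : ℝ) * ∑ e : Edge n k, J e := by
    have e1 : ∀ i : Fin n, ∑ e ∈ Si i, J e
        = ∑ e : Edge n k, if i ∈ e.1 then J e else 0 :=
      fun i => Finset.sum_filter _ _
    rw [Finset.sum_congr rfl fun i _ => e1 i, Finset.sum_comm]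
    rw [Finset.mul_sum]
    refine Finset.sum_congr rfl fun e _ => ?_
    rw [Finset.sum_ite_mem, Finset.univ_inter, Finset.sum_const, e.2, nsmul_eq_mul]
  -- Part 1 combined
  have claim1 : ((n : ℝ) - (k : ℝ)) * ent p X ≤ ∑ i : Fin n, condEnt p X (Ri i) := by
    have h := Finset.sum_le_sum (fun i (_ : i ∈ Finset.univ) => part1 i)
    rw [Finset.sum_sub_distrib, Finset.sum_const, Finset.card_univ, Fintype.card_fin,
      nsmul_eq_mul, hdouble] at h
    have hk0 : (0 : ℝ) ≤ (k : ℝ) := Nat.cast_nonneg k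
    nlinarith [hsumJ]
  -- Part 2 : the transcript dominates the secret given a local view
  have claim2 : ∀ i : Fin n, condEnt p X (Ri i) ≤ condEnt p Mfull (Ri i) := by
    intro i
    obtain ⟨g, hg⟩ := hX i
    unfold condEnt
    have step1 : ent p (fun ω => (X ω, Ri i ω))
        ≤ ent p (fun ω => (Mfull ω, (X ω, Ri i ω))) :=
      ent_le_ent_pair h0 Mfull (fun ω => (X ω, Ri i ω))
    have step2 : ent p (fun ω => (Mfull ω, (X ω, Ri i ω)))
        = ent p (fun ω => (Mfull ω, Ri i ω)) :=
      ent_eq_of_inv (fun t => (t.1, t.2.2)) (fun u => (u.1, (g u.2 u.1, u.2)))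
        (fun ω _ => rfl)
        (fun ω hω => Prod.ext rfl (Prod.ext (hg ω hω) rfl))
    linarith
  -- transcript prefixes
  let PreF : (j : ℕ) → j ≤ T → Ω → (Fin j → μ) :=
    fun j hj ω l => M ⟨l.1, lt_of_lt_of_le l.2 hj⟩ ω
  -- chain rule for the transcript
  have chainM : ∀ (j : ℕ) (hj : j ≤ T), ent p (PreF j hj)
      = ∑ l : Fin j, condEnt p (M ⟨l.1, lt_of_lt_of_le l.2 hj⟩)
          (PreF l.1 (le_of_lt (lt_of_lt_of_le l.2 hj))) := by
    intro j
    induction j with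
    | zero =>
        intro hj
        haveI : Unique (Fin 0 → μ) := Pi.uniqueOfIsEmpty _
        rw [ent_subsingleton h1]
        simp
    | succ j ih =>
        intro hj
        have hjT : j ≤ T := Nat.le_of_succ_le hj
        have hrec : ent p (PreF (j + 1) hj)
            = ent p (fun ω => (M ⟨j, hj⟩ ω, PreF j hjT ω)) :=
          ent_eq_of_inv
            (fun u => (u (Fin.last j), fun l : Fin j => u l.castSucc))
            (fun t => Fin.snoc t.2 t.1)
            (fun ω _ => rfl)
            (fun ω _ => by
              funext l
              refine Fin.lastCases ?_ (fun l' => ?_) l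
              · dsimp only
                rw [Fin.snoc_last]
                rfl
              · dsimp only
                rw [Fin.snoc_castSucc]
                rfl)
        have hcond : ent p (fun ω => (M ⟨j, hj⟩ ω, PreF j hjT ω))
            = ent p (PreF j hjT) + condEnt p (M ⟨j, hj⟩) (PreF j hjT) := by
          unfold condEnt; ring
        rw [hrec, hcond, ih hjT, Fin.sum_univ_castSucc]
        exact congrArg₂ _ (Finset.sum_congr rfl fun l _ => rfl) rfl
  -- chain rule for the transcript together with a local view
  have chainMR : ∀ (i : Fin n) (j : ℕ) (hj : j ≤ T),
      ent p (fun ω => (PreF j hj ω, Ri i ω))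
      = ent p (Ri i) + ∑ l : Fin j, condEnt p (M ⟨l.1, lt_of_lt_of_le l.2 hj⟩)
          (fun ω => (PreF l.1 (le_of_lt (lt_of_lt_of_le l.2 hj)) ω, Ri i ω)) := by
    intro i j
    induction j with
    | zero =>
        intro hj
        have : ent p (fun ω => (PreF 0 hj ω, Ri i ω)) = ent p (Ri i) :=
          ent_eq_of_inv Prod.snd (fun r => (fun l => l.elim0, r))
            (fun ω _ => rfl)
            (fun ω _ => Prod.ext (funext fun l => l.elim0) rfl)
        rw [this]
        simp
    | succ j ih =>
        intro hj
        have hjT : j ≤ T := Nat.le_of_succ_le hj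
        have hrec : ent p (fun ω => (PreF (j + 1) hj ω, Ri i ω))
            = ent p (fun ω => (M ⟨j, hj⟩ ω, (PreF j hjT ω, Ri i ω))) :=
          ent_eq_of_inv
            (fun t => (t.1 (Fin.last j), ((fun l : Fin j => t.1 l.castSucc), t.2)))
            (fun t => (Fin.snoc t.2.1 t.1, t.2.2))
            (fun ω _ => rfl)
            (fun ω _ => by
              refine Prod.ext ?_ rfl
              funext l
              refine Fin.lastCases ?_ (fun l' => ?_) l
              · dsimp only
                rw [Fin.snoc_last]
                rfl
              · dsimp only
                rw [Fin.snoc_castSucc]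
                rfl)
        have hcond : ent p (fun ω => (M ⟨j, hj⟩ ω, (PreF j hjT ω, Ri i ω)))
            = ent p (fun ω => (PreF j hjT ω, Ri i ω))
              + condEnt p (M ⟨j, hj⟩) (fun ω => (PreF j hjT ω, Ri i ω)) := by
          unfold condEnt; ring
        rw [hrec, hcond, ih hjT, Fin.sum_univ_castSucc]
        rw [add_assoc]
        exact congrArg₂ _ rfl (congrArg₂ _ (Finset.sum_congr rfl fun l _ => rfl) rfl)
  -- per-round bound over the writers
  have perl : ∀ j : Fin T,
      ∑ i : Fin n, condEnt p (M j) (fun ω => (PreF j.1 (le_of_lt j.2) ω, Ri i ω))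
      ≤ ((n : ℝ) - 1) * condEnt p (M j) (PreF j.1 (le_of_lt j.2)) := by
    intro j
    obtain ⟨istar, f, hloc, hM⟩ := hproto j
    have dec1 : ∀ i : Fin n, condEnt p (M j) (fun ω => (PreF j.1 (le_of_lt j.2) ω, Ri i ω))
        = ∑ pre, pmass p (PreF j.1 (le_of_lt j.2)) pre
            * condEnt (condp p (PreF j.1 (le_of_lt j.2)) pre) (M j) (Ri i) :=
      fun i => condEnt_pair_decomp h0 (M j) (PreF j.1 (le_of_lt j.2)) (Ri i)
    have dec2 : condEnt p (M j) (PreF j.1 (le_of_lt j.2))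
        = ∑ pre, pmass p (PreF j.1 (le_of_lt j.2)) pre
            * ent (condp p (PreF j.1 (le_of_lt j.2)) pre) (M j) :=
      condEnt_decomp h0 (M j) (PreF j.1 (le_of_lt j.2))
    rw [Finset.sum_congr rfl fun i _ => dec1 i, Finset.sum_comm, dec2, Finset.mul_sum]
    refine Finset.sum_le_sum fun pre _ => ?_
    by_cases hpm : pmass p (PreF j.1 (le_of_lt j.2)) pre = 0
    · simp [hpm]
    set q := condp p (PreF j.1 (le_of_lt j.2)) pre with hq
    obtain ⟨q0, q1⟩ := condp_isProb h0 hpm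
    have qsupp : ∀ ω, q ω ≠ 0 → PreF j.1 (le_of_lt j.2) ω = pre ∧ p ω ≠ 0 :=
      fun ω h => condp_ne_zero h
    have izero : condEnt q (M j) (Ri (istar pre)) = 0 := by
      refine condEnt_eq_zero
        (fun rr => f pre (fun e => if h : istar pre ∈ e.1 then rr ⟨e, h⟩ else dρ)) ?_
      intro ω hω
      obtain ⟨hpre, hpω⟩ := qsupp ω hω
      rw [hM ω hpω]
      have hpre' : (fun l : Fin j.val => M ⟨l.val, l.isLt.trans j.isLt⟩ ω) = pre := hpre
      rw [hpre']
      refine hloc pre _ _ ?_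
      intro e he
      rw [dif_pos he]
    have ile : ∀ i : Fin n, condEnt q (M j) (Ri i) ≤ ent q (M j) :=
      fun i => condEnt_le_ent q0 q1 (M j) (Ri i)
    rw [← Finset.mul_sum]
    have hsplit : ∑ i : Fin n, condEnt q (M j) (Ri i)
        = ∑ i ∈ Finset.univ.erase (istar pre), condEnt q (M j) (Ri i) := by
      rw [← Finset.sum_erase_add _ _ (Finset.mem_univ (istar pre)), izero, add_zero]
    have hbound : ∑ i ∈ Finset.univ.erase (istar pre), condEnt q (M j) (Ri i)
        ≤ ((n : ℝ) - 1) * ent q (M j) := by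
      have hc := Finset.sum_le_card_nsmul (Finset.univ.erase (istar pre))
        (fun i => condEnt q (M j) (Ri i)) (ent q (M j)) (fun i _ => ile i)
      rw [Finset.card_erase_of_mem (Finset.mem_univ _), Finset.card_univ,
        Fintype.card_fin, nsmul_eq_mul] at hc
      have hcast : ((n - 1 : ℕ) : ℝ) = (n : ℝ) - 1 := by
        rw [Nat.cast_sub (le_trans hk1 hkn)]
        simp
      rw [hcast] at hc
      exact hc
    have hpm0 : 0 ≤ pmass p (PreF j.1 (le_of_lt j.2)) pre := pmass_nonneg h0 _ _
    calc pmass p (PreF j.1 (le_of_lt j.2)) pre * ∑ i : Fin n, condEnt q (M j) (Ri i)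
        ≤ pmass p (PreF j.1 (le_of_lt j.2)) pre * (((n : ℝ) - 1) * ent q (M j)) := by
          refine mul_le_mul_of_nonneg_left ?_ hpm0
          rw [hsplit]
          exact hbound
      _ = ((n : ℝ) - 1) * (pmass p (PreF j.1 (le_of_lt j.2)) pre * ent q (M j)) := by ring
  -- Part 3 combined
  have claim3 : ∑ i : Fin n, condEnt p Mfull (Ri i) ≤ ((n : ℝ) - 1) * ent p Mfull := by
    have hMf : ∀ i : Fin n, condEnt p Mfull (Ri i)
        = ∑ l : Fin T, condEnt p (M ⟨l.1, lt_of_lt_of_le l.2 le_rfl⟩)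
            (fun ω => (PreF l.1 (le_of_lt (lt_of_lt_of_le l.2 le_rfl)) ω, Ri i ω)) := by
      intro i
      have : condEnt p Mfull (Ri i)
          = ent p (fun ω => (PreF T le_rfl ω, Ri i ω)) - ent p (Ri i) := rfl
      rw [this, chainMR i T le_rfl]
      ring
    have hMe : ent p Mfull = ∑ l : Fin T, condEnt p (M ⟨l.1, lt_of_lt_of_le l.2 le_rfl⟩)
        (PreF l.1 (le_of_lt (lt_of_lt_of_le l.2 le_rfl))) := chainM T le_rfl
    rw [Finset.sum_congr rfl fun i _ => hMf i, Finset.sum_comm, hMe, Finset.mul_sum]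
    refine Finset.sum_le_sum fun l _ => ?_
    exact perl ⟨l.1, lt_of_lt_of_le l.2 le_rfl⟩
  -- finish
  have main : ((n : ℝ) - (k : ℝ)) * ent p X ≤ ((n : ℝ) - 1) * ent p Mfull :=
    le_trans (claim1.trans (Finset.sum_le_sum fun i _ => claim2 i)) claim3
  rw [div_mul_eq_mul_div, div_le_iff₀ hn1]
  linarith
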